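/- Let k be a positive integer and let 𝒞 ⊆ ℝ^k_{≥0} be non-empty, compact, convex, and closed under the projections π₁,…,π_k. Then 𝒞 = {x ∈ ℝ^k_{≥0} | for all α ∈ Δ_k, αᵀx ≤ C^α(𝒞)}. -/

import Mathlib

lemma proj_finset_mem {k : ℕ} (C : Set (Fin k → ℝ))
    (hproj : ∀ x ∈ C, ∀ j, Function.update x j 0 ∈ C) (s : Finset (Fin k)) :
    ∀ y ∈ C, (fun j => if j ∈ s then 0 else y j) ∈ C := by
  induction s using Finset.induction with
  | empty => intro y hy; simpa using hy
  | @insert a s ha ih =>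
    intro y hy
    have h := hproj _ (ih y hy) a
    have heq : Function.update (fun j => if j ∈ s then 0 else y j) a 0
        = fun j => if j ∈ insert a s then 0 else y j := by
      funext j
      by_cases hj : j = a
      · subst hj; simp [Function.update]
      · simp [Function.update, hj]
    rwa [heq] at h

/-- **Characterization of special regions in `ℝ^k_{≥0}`** (Lemma 5 of the paper).
A non-empty, compact, convex subset of `ℝ^k_{≥0}` that is closed under the
coordinate projections `π_j` (setting the `j`-th coordinate to zero) equals the
set of nonnegative vectors `x` with `αᵀx ≤ C^α = max_{y ∈ 𝒞} αᵀy` for all `α`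
in the probability simplex `Δ_k`. -/
theorem region_characterization_general (k : ℕ) (hk : 0 < k)
    (C : Set (Fin k → ℝ)) (hne : C.Nonempty) (hcomp : IsCompact C)
    (hconv : Convex ℝ C) (hnonneg : ∀ x ∈ C, ∀ j, 0 ≤ x j)
    (hproj : ∀ x ∈ C, ∀ j, Function.update x j 0 ∈ C) :
    C = {x : Fin k → ℝ | (∀ j, 0 ≤ x j) ∧
      ∀ α : Fin k → ℝ, (∀ j, 0 ≤ α j) → ∑ j, α j = 1 →
        ∑ j, α j * x j ≤ sSup ((fun y : Fin k → ℝ => ∑ j, α j * y j) '' C)} := by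
  ext x
  constructor
  · intro hx
    refine ⟨hnonneg x hx, ?_⟩
    intro α hα hsum
    have hcont : Continuous (fun y : Fin k → ℝ => ∑ j, α j * y j) := by
      continuity
    have hbdd : BddAbove ((fun y : Fin k → ℝ => ∑ j, α j * y j) '' C) :=
      (hcomp.image hcont).bddAbove
    exact le_csSup hbdd ⟨x, hx, rfl⟩
  · rintro ⟨hxnn, hall⟩
    by_contra hx
    -- separate x from C
    have hclosed : IsClosed C := hcomp.isClosed
    obtain ⟨f, u, hfu, hux⟩ := geometric_hahn_banach_closed_point hconv hclosed hx
    -- representation of f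
    set β : Fin k → ℝ := fun j => f (Pi.single j 1) with hβ
    have hrep : ∀ z : Fin k → ℝ, f z = ∑ j, z j * β j := by
      intro z
      have hz : z = ∑ j, z j • (Pi.single j 1 : Fin k → ℝ) := by
        funext i
        simp [Pi.single_apply, Finset.sum_ite_eq']
      calc f z = f (∑ j, z j • (Pi.single j 1 : Fin k → ℝ)) := by rw [← hz]
        _ = ∑ j, z j * β j := by
            rw [map_sum]; simp [hβ]
    -- 0 ∈ C
    obtain ⟨y₀, hy₀⟩ := hne
    have h0mem : (0 : Fin k → ℝ) ∈ C := by
      have := proj_finset_mem C hproj Finset.univ y₀ hy₀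
      simp at this; exact this
    have hu0 : (0 : ℝ) < u := by simpa using hfu 0 h0mem
    -- positive part
    set βp : Fin k → ℝ := fun j => max (β j) 0 with hβp
    have hβpnn : ∀ j, 0 ≤ βp j := fun j => le_max_right _ _
    set S : Finset (Fin k) := Finset.univ.filter (fun j => β j < 0) with hS
    -- for y ∈ C : ∑ βp j * y j = f (projection of y) < u
    have hkey : ∀ y ∈ C, ∑ j, βp j * y j < u := by
      intro y hy
      have hmem := proj_finset_mem C hproj S y hy
      have hlt := hfu _ hmem
      rw [hrep] at hlt
      have heq : ∑ j, (if j ∈ S then 0 else y j) * β j = ∑ j, βp j * y j := by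
        apply Finset.sum_congr rfl
        intro j _
        by_cases hj : β j < 0
        · simp [hS, hj, hβp, max_eq_right hj.le]
        · push_neg at hj
          simp [hS, not_lt.mpr hj, hβp, max_eq_left hj, mul_comm]
      rwa [heq] at hlt
    -- f x ≤ ∑ βp j * x j
    have hfx : f x ≤ ∑ j, βp j * x j := by
      rw [hrep]
      apply Finset.sum_le_sum
      intro j _
      rw [mul_comm]
      exact mul_le_mul_of_nonneg_right (le_max_left _ _) (hxnn j)
    have hxu : u < ∑ j, βp j * x j := lt_of_lt_of_le hux hfx
    -- s := ∑ βp > 0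
    set s : ℝ := ∑ j, βp j with hs
    have hspos : 0 < s := by
      rcases eq_or_lt_of_le (Finset.sum_nonneg (fun j _ => hβpnn j)) with h | h
      · exfalso
        have hall0 : ∀ j, βp j = 0 := by
          intro j
          have := (Finset.sum_eq_zero_iff_of_nonneg (fun j _ => hβpnn j)).mp h.symm
          exact this j (Finset.mem_univ j)
        have : ∑ j, βp j * x j = 0 := by
          apply Finset.sum_eq_zero; intro j _; rw [hall0 j, zero_mul]
        rw [this] at hxu
        exact absurd (hu0.trans hxu) (lt_irrefl 0)
      · exact h
    -- α := βp / s
    set α : Fin k → ℝ := fun j => βp j / s with hα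
    have hαnn : ∀ j, 0 ≤ α j := fun j => div_nonneg (hβpnn j) hspos.le
    have hαsum : ∑ j, α j = 1 := by
      rw [hα]
      rw [← Finset.sum_div]
      exact div_self hspos.ne'
    have hle := hall α hαnn hαsum
    -- sSup ≤ u / s
    have hne' : ((fun y : Fin k → ℝ => ∑ j, α j * y j) '' C).Nonempty :=
      ⟨_, Set.mem_image_of_mem _ hy₀⟩
    have hsup_le : sSup ((fun y : Fin k → ℝ => ∑ j, α j * y j) '' C) ≤ u / s := by
      apply csSup_le hne'
      rintro _ ⟨y, hy, rfl⟩
      show ∑ j, α j * y j ≤ u / s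
      have : ∑ j, α j * y j = (∑ j, βp j * y j) / s := by
        rw [Finset.sum_div]
        apply Finset.sum_congr rfl
        intro j _
        rw [hα, div_mul_eq_mul_div]
      rw [this]
      exact (div_le_div_iff_of_pos_right hspos).mpr (hkey y hy).le
    have hxα : ∑ j, α j * x j = (∑ j, βp j * x j) / s := by
      rw [Finset.sum_div]
      apply Finset.sum_congr rfl
      intro j _
      rw [hα, div_mul_eq_mul_div]
    have : u / s < ∑ j, α j * x j := by
      rw [hxα]
      exact (div_lt_div_iff_of_pos_right hspos).mpr hxu
    exact absurd (hle.trans hsup_le) (not_le.mpr this)
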